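/- For an integer a ≥ 1, set p = 2a and define h(s) = (√s − 2)^{p−1} s^{−1/2} for s > 0. Then the a-th derivative h^{(a)} is (absolutely) integrable on (4,∞), and ∫₄^∞ h^{(a)}(s) ds = (a − 1)! (= Γ(a)). Equivalently, h^{(a−1)}(s) → (a − 1)! as s → ∞. -/

import Mathlib

open MeasureTheory Set Filter

section aux
open Finset Polynomial

lemma alt_sum_poly : ∀ (n : ℕ) (P : Polynomial ℝ), P.degree < n →
    ∑ k ∈ Finset.range (n+1), (-1:ℝ)^k * (n.choose k) * P.eval (k:ℝ) = 0 := by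
  intro n
  induction n with
  | zero =>
    intro P hP
    have : P = 0 := by
      rw [← Polynomial.degree_eq_bot]
      exact Nat.WithBot.lt_zero_iff.mp (by exact_mod_cast hP)
    simp [this]
  | succ n IH =>
    intro P hP
    by_cases hP0 : P = 0
    · simp [hP0]
    set Q : Polynomial ℝ := P - P.comp (X + C 1) with hQ
    have hQeval : ∀ x : ℝ, Q.eval x = P.eval x - P.eval (x + 1) := by
      intro x; simp [hQ]
    have hcomp0 : P.comp (X + C 1) ≠ 0 := by
      intro h
      apply hP0
      have : (P.comp (X + C 1)).comp (X - C 1) = P := by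
        rw [comp_assoc]
        simp [sub_add_cancel]
      rw [h, zero_comp] at this
      exact this.symm
    have hdQ : Q.degree < n := by
      have hdc : (P.comp (X + C 1)).degree = P.degree := by
        rw [degree_eq_natDegree hcomp0, degree_eq_natDegree hP0, natDegree_comp,
          natDegree_X_add_C, mul_one]
      have hlc : P.leadingCoeff = (P.comp (X + C 1)).leadingCoeff := by
        rw [leadingCoeff_comp (by rw [natDegree_X_add_C]; exact one_ne_zero),
          (monic_X_add_C (1:ℝ)).leadingCoeff, one_pow, mul_one]
      have h1 : Q.degree < P.degree := degree_sub_lt hdc.symm hP0 hlc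
      have h2 : P.degree ≤ (n : WithBot ℕ) := by
        have := (natDegree_lt_iff_degree_lt hP0).mpr hP
        exact le_trans degree_le_natDegree (by exact_mod_cast Nat.lt_succ_iff.mp this)
      exact lt_of_lt_of_le h1 h2
    have IHQ := IH Q hdQ
    set A := ∑ i ∈ Finset.range (n+1), (-1:ℝ)^i * (n.choose i) * P.eval ((i:ℝ)+1) with hA
    set B := ∑ i ∈ Finset.range (n+1), (-1:ℝ)^i * (n.choose i) * P.eval (i:ℝ) with hB
    have h1 : ∑ i ∈ Finset.range (n+1), (-1:ℝ)^(i+1) * ((n+1).choose (i+1)) * P.eval ((i:ℝ)+1)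
        = -A + (B - P.eval 0) := by
      have e1 : ∑ i ∈ Finset.range (n+1), (-1:ℝ)^(i+1) * ((n+1).choose (i+1)) * P.eval ((i:ℝ)+1)
          = (∑ i ∈ Finset.range (n+1), -((-1:ℝ)^i * (n.choose i) * P.eval ((i:ℝ)+1)))
            + ∑ i ∈ Finset.range (n+1), (-1:ℝ)^(i+1) * (n.choose (i+1)) * P.eval ((i:ℝ)+1) := by
        rw [← Finset.sum_add_distrib]
        refine Finset.sum_congr rfl fun k _ => ?_
        rw [Nat.choose_succ_succ]
        push_cast
        ring
      have e2 : ∑ i ∈ Finset.range (n+1), (-1:ℝ)^(i+1) * (n.choose (i+1)) * P.eval ((i:ℝ)+1)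
          = B - P.eval 0 := by
        rw [Finset.sum_range_succ, Nat.choose_succ_self, hB, Finset.sum_range_succ']
        push_cast
        simp [Nat.choose_zero_right]
      rw [e1, e2, Finset.sum_neg_distrib, ← hA]
    have h2 : B - A = ∑ i ∈ Finset.range (n+1), (-1:ℝ)^i * (n.choose i) * Q.eval (i:ℝ) := by
      rw [hA, hB, ← Finset.sum_sub_distrib]
      refine Finset.sum_congr rfl fun k _ => ?_
      rw [hQeval]
      ring
    rw [Finset.sum_range_succ']
    push_cast
    rw [h1]
    norm_num
    linear_combination h2 + IHQ


lemma prod_fact (m : ℕ) : ∏ i ∈ Finset.range m, ((m:ℝ) - (i:ℝ)) = (m.factorial : ℝ) := by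
  have : ∏ i ∈ Finset.range m, ((m:ℝ) - (i:ℝ)) = ((∏ i ∈ Finset.range m, (m - i) : ℕ) : ℝ) := by
    rw [Nat.cast_prod]
    exact Finset.prod_congr rfl fun i hi => by
      have := Finset.mem_range.mp hi
      rw [Nat.cast_sub this.le]
  rw [this, ← Nat.descFactorial_eq_prod_range, Nat.descFactorial_self]


lemma h_formula (a : ℕ) (ha : 1 ≤ a) (m : ℕ) : ∀ s ∈ Ioi (0:ℝ),
    iteratedDerivWithin m
      (fun s : ℝ => (Real.sqrt s - 2) ^ (2 * a - 1) * s ^ (-(1 : ℝ) / 2)) (Ioi 0) s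
    = ∑ k ∈ Finset.range (2*a), ((2*a-1).choose k : ℝ) * (-2:ℝ)^(2*a-1-k)
        * (∏ i ∈ Finset.range m, (((k:ℝ)-1)/2 - (i:ℝ))) * s ^ (((k:ℝ)-1)/2 - (m:ℝ)) := by
  induction m with
  | zero =>
    intro s hs
    have hs' : (0:ℝ) < s := hs
    rw [iteratedDerivWithin_zero]
    have expand : (Real.sqrt s - 2) ^ (2 * a - 1)
        = ∑ k ∈ Finset.range (2*a), Real.sqrt s ^ k * (-2:ℝ)^(2*a-1-k) * ((2*a-1).choose k : ℝ) := by
      rw [sub_eq_add_neg, add_pow, show 2*a = (2*a-1)+1 by omega]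
      norm_num
    rw [expand, Finset.sum_mul]
    refine Finset.sum_congr rfl fun k _ => ?_
    have hsqrt : Real.sqrt s ^ k = s ^ ((k:ℝ)/2) := by
      rw [Real.sqrt_eq_rpow, ← Real.rpow_natCast (s ^ ((1:ℝ)/2)) k, ← Real.rpow_mul hs'.le]
      congr 1
      push_cast
      ring
    simp only [Finset.range_zero, Finset.prod_empty, Nat.cast_zero, mul_one]
    rw [hsqrt, show ((k:ℝ)-1)/2 - 0 = (k:ℝ)/2 + (-(1:ℝ)/2) by ring, Real.rpow_add hs']
    ring
  | succ m IH =>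
    intro s hs
    have hs' : (0:ℝ) < s := hs
    rw [iteratedDerivWithin_succ,
      derivWithin_of_isOpen isOpen_Ioi hs]
    have heq : iteratedDerivWithin m
        (fun s : ℝ => (Real.sqrt s - 2) ^ (2 * a - 1) * s ^ (-(1 : ℝ) / 2)) (Ioi 0)
        =ᶠ[nhds s] fun t : ℝ => ∑ k ∈ Finset.range (2*a), ((2*a-1).choose k : ℝ) * (-2:ℝ)^(2*a-1-k)
          * (∏ i ∈ Finset.range m, (((k:ℝ)-1)/2 - (i:ℝ))) * t ^ (((k:ℝ)-1)/2 - (m:ℝ)) :=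
      Filter.eventuallyEq_of_mem (isOpen_Ioi.mem_nhds hs) (fun t ht => IH t ht)
    rw [heq.deriv_eq]
    have hG : HasDerivAt (fun t : ℝ => ∑ k ∈ Finset.range (2*a), ((2*a-1).choose k : ℝ)
          * (-2:ℝ)^(2*a-1-k) * (∏ i ∈ Finset.range m, (((k:ℝ)-1)/2 - (i:ℝ)))
          * t ^ (((k:ℝ)-1)/2 - (m:ℝ)))
        (∑ k ∈ Finset.range (2*a), ((2*a-1).choose k : ℝ) * (-2:ℝ)^(2*a-1-k)
          * (∏ i ∈ Finset.range m, (((k:ℝ)-1)/2 - (i:ℝ)))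
          * ((((k:ℝ)-1)/2 - (m:ℝ)) * s ^ ((((k:ℝ)-1)/2 - (m:ℝ)) - 1))) s :=
      HasDerivAt.fun_sum fun k _ =>
        (Real.hasDerivAt_rpow_const (Or.inl (ne_of_gt hs'))).const_mul _
    rw [hG.deriv]
    refine Finset.sum_congr rfl fun k _ => ?_
    rw [Finset.prod_range_succ,
      show (((k:ℝ)-1)/2 - (m:ℝ)) - 1 = ((k:ℝ)-1)/2 - (((m+1 : ℕ)):ℝ) by push_cast; ring]
    ring


end aux

section main
variable (a : ℕ)

noncomputable def Gf (a m : ℕ) : ℝ → ℝ := fun t =>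
  ∑ k ∈ Finset.range (2*a), ((2*a-1).choose k : ℝ) * (-2:ℝ)^(2*a-1-k)
    * (∏ i ∈ Finset.range m, (((k:ℝ)-1)/2 - (i:ℝ))) * t ^ (((k:ℝ)-1)/2 - (m:ℝ))

lemma Gf_hasDerivAt (a m : ℕ) (ha : 1 ≤ a) {s : ℝ} (hs : 0 < s) :
    HasDerivAt (Gf a m) (Gf a (m+1) s) s := by
  have hG : HasDerivAt (Gf a m)
      (∑ k ∈ Finset.range (2*a), ((2*a-1).choose k : ℝ) * (-2:ℝ)^(2*a-1-k)
        * (∏ i ∈ Finset.range m, (((k:ℝ)-1)/2 - (i:ℝ)))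
        * ((((k:ℝ)-1)/2 - (m:ℝ)) * s ^ ((((k:ℝ)-1)/2 - (m:ℝ)) - 1))) s :=
    HasDerivAt.fun_sum fun k _ =>
      (Real.hasDerivAt_rpow_const (Or.inl (ne_of_gt hs))).const_mul _
  have : Gf a (m+1) s = ∑ k ∈ Finset.range (2*a), ((2*a-1).choose k : ℝ) * (-2:ℝ)^(2*a-1-k)
      * (∏ i ∈ Finset.range m, (((k:ℝ)-1)/2 - (i:ℝ)))
      * ((((k:ℝ)-1)/2 - (m:ℝ)) * s ^ ((((k:ℝ)-1)/2 - (m:ℝ)) - 1)) := by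
    refine Finset.sum_congr rfl fun k _ => ?_
    rw [Finset.prod_range_succ,
      show (((k:ℝ)-1)/2 - (m:ℝ)) - 1 = ((k:ℝ)-1)/2 - (((m+1 : ℕ)):ℝ) by push_cast; ring]
    ring
  rw [this]
  exact hG

lemma Gf_int (a : ℕ) (ha : 1 ≤ a) : IntegrableOn (Gf a a) (Ioi (4:ℝ)) := by
  refine integrable_finset_sum _ fun k hk => ?_
  by_cases hka : k = 2*a - 1
  · have hprod : ∏ i ∈ Finset.range a, (((k:ℝ)-1)/2 - (i:ℝ)) = 0 := by
      refine Finset.prod_eq_zero (Finset.mem_range.mpr (by omega : a - 1 < a)) ?_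
      subst hka
      rw [Nat.cast_sub (by omega : 1 ≤ 2*a), Nat.cast_sub (by omega : 1 ≤ a)]
      push_cast
      ring
    simp [hprod]
  · have hk' : (k:ℝ) ≤ 2*a - 2 := by
      have : k ≤ 2*a - 2 := by
        have := Finset.mem_range.mp hk; omega
      calc (k:ℝ) ≤ ((2*a-2 : ℕ) : ℝ) := by exact_mod_cast this
        _ = 2*a - 2 := by
          rw [Nat.cast_sub (by omega : 2 ≤ 2*a)]; push_cast; ring
    have he : ((k:ℝ)-1)/2 - (a:ℝ) < -1 := by linarith
    exact (integrableOn_Ioi_rpow_of_lt he (by norm_num)).const_mul _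

lemma Gf_tendsto (a : ℕ) (ha : 1 ≤ a) :
    Tendsto (Gf a (a-1)) atTop (nhds ((a-1).factorial : ℝ)) := by
  have hc1 : ((a-1:ℕ):ℝ) = (a:ℝ) - 1 := by
    rw [Nat.cast_sub (by omega : 1 ≤ a)]; push_cast; ring
  have hmain : Tendsto (Gf a (a-1)) atTop
      (nhds (∑ k ∈ Finset.range (2*a), if k = 2*a-1 then ((a-1).factorial : ℝ) else 0)) := by
    refine tendsto_finset_sum _ fun k hk => ?_
    by_cases hka : k = 2*a-1
    · rw [if_pos hka]
      subst hka
      have hc : (((2*a-1:ℕ):ℝ)-1)/2 = ((a-1:ℕ):ℝ) := by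
        rw [Nat.cast_sub (by omega : 1 ≤ 2*a), hc1]
        push_cast; ring
      have hfun : (fun s : ℝ => ((2*a-1).choose (2*a-1) : ℝ) * (-2:ℝ)^(2*a-1-(2*a-1))
          * (∏ i ∈ Finset.range (a-1), ((((2*a-1:ℕ):ℝ)-1)/2 - (i:ℝ)))
          * s ^ ((((2*a-1:ℕ):ℝ)-1)/2 - ((a-1:ℕ):ℝ)))
          = fun _ : ℝ => ((a-1).factorial : ℝ) := by
        funext s
        rw [hc, sub_self, Real.rpow_zero, Nat.choose_self, Nat.sub_self]
        rw [show ∏ i ∈ Finset.range (a-1), (((a-1:ℕ):ℝ) - (i:ℝ)) = ((a-1).factorial : ℝ)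
          from prod_fact (a-1)]
        simp
      rw [hfun]
      exact tendsto_const_nhds
    · rw [if_neg hka]
      have hk2 : (k:ℝ) ≤ 2*a - 2 := by
        have hh : k ≤ 2*a - 2 := by have := Finset.mem_range.mp hk; omega
        calc (k:ℝ) ≤ ((2*a-2 : ℕ) : ℝ) := by exact_mod_cast hh
          _ = 2*a - 2 := by rw [Nat.cast_sub (by omega : 2 ≤ 2*a)]; push_cast; ring
      have he : ((k:ℝ)-1)/2 - ((a-1:ℕ):ℝ) < 0 := by rw [hc1]; linarith
      have h2 : Tendsto (fun s:ℝ => s ^ (((k:ℝ)-1)/2 - ((a-1:ℕ):ℝ))) atTop (nhds 0) := by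
        have h3 := tendsto_rpow_neg_atTop (y := -(((k:ℝ)-1)/2 - ((a-1:ℕ):ℝ))) (by linarith)
        simpa using h3
      have h4 := h2.const_mul (((2*a-1).choose k : ℝ) * (-2:ℝ)^(2*a-1-k)
        * (∏ i ∈ Finset.range (a-1), (((k:ℝ)-1)/2 - (i:ℝ))))
      simpa using h4
  rw [Finset.sum_ite_eq' (Finset.range (2*a)) (2*a-1)
    (fun _ => ((a-1).factorial : ℝ))] at hmain
  rw [if_pos (Finset.mem_range.mpr (by omega))] at hmain
  exact hmain


lemma Gf_four (a : ℕ) (ha : 1 ≤ a) : Gf a (a-1) 4 = 0 := by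
  classical
  set P : Polynomial ℝ := ∏ i ∈ Finset.range (a-1),
    (Polynomial.C (1/2:ℝ) * (Polynomial.X - 1) - Polynomial.C (i:ℝ)) with hP
  have heval : ∀ x : ℝ, P.eval x = ∏ i ∈ Finset.range (a-1), ((x-1)/2 - (i:ℝ)) := by
    intro x
    rw [hP, Polynomial.eval_prod]
    exact Finset.prod_congr rfl fun i _ => by simp; ring
  have hdeg : P.degree < ((2*a-1 : ℕ) : WithBot ℕ) := by
    have h1 : P.natDegree ≤ a-1 := by
      refine le_trans (Polynomial.natDegree_prod_le _ _)
        (le_trans (Finset.sum_le_sum (g := fun _ => 1) fun i _ => ?_) (by simp))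
      compute_degree
    calc P.degree ≤ (P.natDegree : WithBot ℕ) := Polynomial.degree_le_natDegree
      _ < ((2*a-1 : ℕ) : WithBot ℕ) := by
          exact_mod_cast Nat.lt_of_le_of_lt h1 (by omega)
  have hsum := alt_sum_poly (2*a-1) P hdeg
  have hca : ((a-1:ℕ):ℝ) = (a:ℝ) - 1 := by
    rw [Nat.cast_sub (by omega : 1 ≤ a)]; push_cast; ring
  have hterm : ∀ k ∈ Finset.range (2*a),
      ((2*a-1).choose k : ℝ) * (-2:ℝ)^(2*a-1-k)
        * (∏ i ∈ Finset.range (a-1), (((k:ℝ)-1)/2 - (i:ℝ)))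
        * (4:ℝ) ^ (((k:ℝ)-1)/2 - ((a-1:ℕ):ℝ))
      = -((-1:ℝ)^k * ((2*a-1).choose k : ℝ) * P.eval (k:ℝ)) := by
    intro k hk
    have hk1 : k ≤ 2*a-1 := by have := Finset.mem_range.mp hk; omega
    have hcast : ((2*a-1-k:ℕ):ℝ) = 2*(a:ℝ) - 1 - (k:ℝ) := by
      rw [Nat.cast_sub hk1, Nat.cast_sub (by omega : 1 ≤ 2*a)]
      push_cast; ring
    have hpow : (-2:ℝ)^(2*a-1-k) * (4:ℝ) ^ (((k:ℝ)-1)/2 - ((a-1:ℕ):ℝ)) = -(-1:ℝ)^k := by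
      have h4 : (4:ℝ) ^ (((k:ℝ)-1)/2 - ((a-1:ℕ):ℝ))
          = (2:ℝ) ^ (2*(((k:ℝ)-1)/2 - ((a-1:ℕ):ℝ))) := by
        rw [show (4:ℝ) = (2:ℝ)^((2:ℕ):ℝ) by rw [Real.rpow_natCast]; norm_num,
          ← Real.rpow_mul (by norm_num : (0:ℝ) ≤ 2)]
        norm_num
      have hsign : (-1:ℝ)^(2*a-1-k) = -(-1:ℝ)^k := by
        have hm : (-1:ℝ)^(2*a-1-k) * (-1:ℝ)^k = -1 := by
          rw [← pow_add, show (2*a-1-k)+k = 2*(a-1)+1 from by omega]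
          exact Odd.neg_one_pow ⟨a-1, by ring⟩
        have h2 : (-1:ℝ)^k * (-1:ℝ)^k = 1 := by
          rw [← pow_add]; exact Even.neg_one_pow ⟨k, by ring⟩
        calc (-1:ℝ)^(2*a-1-k) = (-1:ℝ)^(2*a-1-k) * ((-1:ℝ)^k * (-1:ℝ)^k) := by
              rw [h2, mul_one]
          _ = ((-1:ℝ)^(2*a-1-k) * (-1:ℝ)^k) * (-1:ℝ)^k := by ring
          _ = -(-1:ℝ)^k := by rw [hm]; ring
      rw [neg_pow, h4, ← Real.rpow_natCast (2:ℝ) (2*a-1-k), mul_assoc,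
        ← Real.rpow_add (by norm_num : (0:ℝ) < 2), hcast, hca,
        show 2*(a:ℝ) - 1 - (k:ℝ) + 2*(((k:ℝ)-1)/2 - ((a:ℝ)-1)) = 0 from by ring,
        Real.rpow_zero, mul_one, hsign]
    rw [heval]
    linear_combination (((2*a-1).choose k : ℝ)
      * ∏ i ∈ Finset.range (a-1), (((k:ℝ)-1)/2 - (i:ℝ))) * hpow
  unfold Gf
  rw [Finset.sum_congr rfl hterm]
  rw [show 2*a-1+1 = 2*a from by omega] at hsum
  rw [Finset.sum_neg_distrib, hsum, neg_zero]


/-- For an integer `a ≥ 1`, put `p = 2a` and `h s = (√s − 2)^(p−1) · s^(−1/2)` for `s > 0`.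
Then the `a`-th derivative `h^(a)` is (absolutely) integrable on `(4, ∞)` with
`∫₄^∞ h^(a)(s) ds = (a − 1)! (= Γ(a))`; equivalently `h^(a−1)(s) → (a − 1)!` as `s → ∞`. -/
theorem integral_of_h_deriv (a : ℕ) (ha : 1 ≤ a) :
    IntegrableOn
      (iteratedDerivWithin a
        (fun s : ℝ => (Real.sqrt s - 2) ^ (2 * a - 1) * s ^ (-(1 : ℝ) / 2)) (Ioi 0))
      (Ioi 4) ∧
    ∫ s in Ioi (4 : ℝ),
        iteratedDerivWithin a
          (fun s : ℝ => (Real.sqrt s - 2) ^ (2 * a - 1) * s ^ (-(1 : ℝ) / 2)) (Ioi 0) s =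
      (Nat.factorial (a - 1) : ℝ) ∧
    Tendsto
      (iteratedDerivWithin (a - 1)
        (fun s : ℝ => (Real.sqrt s - 2) ^ (2 * a - 1) * s ^ (-(1 : ℝ) / 2)) (Ioi 0))
      atTop (nhds (Nat.factorial (a - 1) : ℝ)) := by
  set f : ℝ → ℝ := fun s : ℝ => (Real.sqrt s - 2) ^ (2 * a - 1) * s ^ (-(1 : ℝ) / 2) with hf
  have h40 : Ioi (4:ℝ) ⊆ Ioi 0 := fun x hx => lt_trans (by norm_num : (0:ℝ) < 4) hx
  have hEqOn : EqOn (iteratedDerivWithin a f (Ioi 0)) (Gf a a) (Ioi 4) := fun x hx =>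
    h_formula a ha a x (h40 hx)
  have part1 : IntegrableOn (iteratedDerivWithin a f (Ioi 0)) (Ioi 4) :=
    (integrableOn_congr_fun hEqOn measurableSet_Ioi).mpr (Gf_int a ha)
  have hev : iteratedDerivWithin (a-1) f (Ioi 0) =ᶠ[atTop] Gf a (a-1) := by
    filter_upwards [eventually_gt_atTop 0] with s hs
    exact h_formula a ha (a-1) s hs
  have part3 : Tendsto (iteratedDerivWithin (a-1) f (Ioi 0)) atTop
      (nhds ((a-1).factorial : ℝ)) := (Gf_tendsto a ha).congr' hev.symm
  have hF4 : iteratedDerivWithin (a-1) f (Ioi 0) 4 = 0 := by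
    have h1 := h_formula a ha (a-1) 4 (by norm_num : (4:ℝ) ∈ Ioi 0)
    have h2 := Gf_four a ha
    unfold Gf at h2
    rw [h1, h2]
  have hev4 : iteratedDerivWithin (a-1) f (Ioi 0) =ᶠ[nhds (4:ℝ)] Gf a (a-1) :=
    Filter.eventuallyEq_of_mem (isOpen_Ioi.mem_nhds (by norm_num : (4:ℝ) ∈ Ioi 0))
      (fun t ht => h_formula a ha (a-1) t ht)
  have hc : ContinuousAt (Gf a (a-1)) 4 :=
    (Gf_hasDerivAt a (a-1) ha (by norm_num : (0:ℝ) < 4)).continuousAt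
  have hcont : ContinuousWithinAt (iteratedDerivWithin (a-1) f (Ioi 0)) (Ici 4) 4 :=
    (hc.congr hev4.symm).continuousWithinAt
  have hderiv : ∀ x ∈ Ioi (4:ℝ), HasDerivAt (iteratedDerivWithin (a-1) f (Ioi 0))
      (iteratedDerivWithin a f (Ioi 0) x) x := by
    intro x hx
    have hx0 : (0:ℝ) < x := lt_trans (by norm_num) hx
    have hevx : iteratedDerivWithin (a-1) f (Ioi 0) =ᶠ[nhds x] Gf a (a-1) :=
      Filter.eventuallyEq_of_mem (isOpen_Ioi.mem_nhds hx0)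
        (fun t ht => h_formula a ha (a-1) t ht)
    have hd := Gf_hasDerivAt a (a-1) ha hx0
    rw [show (a-1)+1 = a from by omega] at hd
    have hx' : iteratedDerivWithin a f (Ioi 0) x = Gf a a x := h_formula a ha a x hx0
    rw [hx']
    exact hd.congr_of_eventuallyEq hevx
  have key := integral_Ioi_of_hasDerivAt_of_tendsto hcont hderiv part1 part3
  rw [hF4, sub_zero] at key
  exact ⟨part1, key, part3⟩

end main
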